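/- arXiv:2309.12682 — 3 statements merged into one kernel-verified Lean document; each statement's English description precedes it below -/
import Mathlib

section
/- Let T be a finite tree and u a vertex of T. Then there exist vertices v, w of T such that F_T(u,v,w) = ε₃(u;T) and d_T(u,v) = ε₂(u;T); that is, a vertex at maximum distance from u can always be chosen as one of the Fermat eccentric vertices of u. -/
open SimpleGraph Finset

variable {V : Type*}

/-- The Fermat distance of a vertex triple: minimum over all vertices σ of
    `d(σ,u) + d(σ,v) + d(σ,w)`. -/
noncomputable def fermatDist (G : SimpleGraph V) (u v w : V) : ℕ :=
  ⨅ σ : V, (G.dist σ u + G.dist σ v + G.dist σ w)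

/-- The Fermat eccentricity `ε₃(u;G)`: maximum Fermat distance of triples containing `u`. -/
noncomputable def fermatEcc [Fintype V] (G : SimpleGraph V) (u : V) : ℕ :=
  Finset.univ.sup fun p : V × V => fermatDist G u p.1 p.2

/-- The ordinary eccentricity `ε₂(u;G)`. -/
noncomputable def ecc2 [Fintype V] (G : SimpleGraph V) (u : V) : ℕ :=
  Finset.univ.sup fun v => G.dist u v

/-- The diameter of `G`. -/
noncomputable def gdiam [Fintype V] (G : SimpleGraph V) : ℕ :=
  Finset.univ.sup fun p : V × V => G.dist p.1 p.2

/-- A central vertex: one minimizing the ordinary eccentricity. -/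
def isCentral [Fintype V] (G : SimpleGraph V) (c : V) : Prop :=
  ∀ u : V, ecc2 G c ≤ ecc2 G u

/-- The number of edges of `G`. -/
noncomputable def numEdges [Fintype V] (G : SimpleGraph V) : ℕ :=
  letI := Classical.decEq V
  letI := Classical.decRel G.Adj
  G.edgeFinset.card

/-- The first Zagreb–Fermat eccentricity index `F₁(G) = Σ_u ε₃(u)²`. -/
noncomputable def F1 [Fintype V] (G : SimpleGraph V) : ℕ :=
  ∑ u : V, (fermatEcc G u) ^ 2

/-- The second Zagreb–Fermat eccentricity index `F₂(G) = Σ_{uv ∈ E} ε₃(u)·ε₃(v)`. -/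
noncomputable def F2 [Fintype V] (G : SimpleGraph V) : ℕ :=
  letI := Classical.decEq V
  letI := Classical.decRel G.Adj
  ∑ e ∈ G.edgeFinset,
    Sym2.lift ⟨fun u v => fermatEcc G u * fermatEcc G v, fun _ _ => mul_comm _ _⟩ e

/-- `u` lies in the subtree `T_{v_i}` hanging off the `i`-th vertex of the path `P`:
its geodesic to every vertex of `P` passes through `P.getVert i`. -/
def inSubtree (G : SimpleGraph V) {a b : V} (P : G.Walk a b) (i : ℕ) (u : V) : Prop :=
  ∀ j ≤ P.length, G.dist u (P.getVert j) = G.dist u (P.getVert i) + G.dist (P.getVert i) (P.getVert j)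

/-- `ℓ_i`: the height of the subtree `T_{v_i}`. -/
noncomputable def subtreeHeight [Fintype V] (G : SimpleGraph V) {a b : V} (P : G.Walk a b)
    (i : ℕ) : ℕ :=
  letI := Classical.decPred (inSubtree G P i)
  Finset.univ.sup fun u => if inSubtree G P i u then G.dist (P.getVert i) u else 0


section Aux

variable {T : SimpleGraph V}

lemma tree_path_length (hT : T.IsTree) {x y : V} (P : T.Walk x y) (hP : P.IsPath) :
    P.length = T.dist x y := by
  obtain ⟨Q, hQp, hQl⟩ := hT.isConnected.exists_path_of_dist x y
  rw [(hT.existsUnique_path x y).unique hP hQp, hQl]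

lemma support_dist (hT : T.IsTree) {x y z : V} (P : T.Walk x y) (hP : P.IsPath)
    (hz : z ∈ P.support) : T.dist x z + T.dist z y = T.dist x y := by
  classical
  have h1 := tree_path_length hT _ (hP.takeUntil hz)
  have h2 := tree_path_length hT _ (hP.dropUntil hz)
  have h3 := tree_path_length hT P hP
  have h4 := congrArg SimpleGraph.Walk.length (P.take_spec hz)
  rw [SimpleGraph.Walk.length_append] at h4
  omega

lemma mem_path_of_between (hT : T.IsTree) {x y z : V}
    (hz : T.dist x z + T.dist z y = T.dist x y)
    (P : T.Walk x y) (hP : P.IsPath) : z ∈ P.support := by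
  obtain ⟨Q, hQp, hQl⟩ := hT.isConnected.exists_path_of_dist x z
  obtain ⟨R, hRp, hRl⟩ := hT.isConnected.exists_path_of_dist z y
  have hW : (Q.append R).IsPath := by
    rw [SimpleGraph.Walk.isPath_def, SimpleGraph.Walk.support_append, List.nodup_append]
    refine ⟨hQp.support_nodup, hRp.support_nodup.tail, ?_⟩
    intro w hwQ w₂ hwR hww
    subst hww
    have hwR' : w ∈ R.support := List.mem_of_mem_tail hwR
    have hwz : w ≠ z := by
      rintro rfl
      have hn := hRp.support_nodup
      rw [R.support_eq_cons] at hn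
      exact (List.nodup_cons.mp hn).1 hwR
    have e1 := support_dist hT Q hQp hwQ
    have e2 := support_dist hT R hRp hwR'
    have e3 := hT.isConnected.dist_triangle (u := x) (v := w) (w := y)
    have e4 : 0 < T.dist z w := hT.isConnected.pos_dist_of_ne (Ne.symm hwz)
    have e5 : T.dist w z = T.dist z w := SimpleGraph.dist_comm
    omega
  have : Q.append R = P := (hT.existsUnique_path x y).unique hW hP
  rw [← this]
  simp [SimpleGraph.Walk.mem_support_append_iff]

lemma exists_median (hT : T.IsTree) (u a b : V) :
    ∃ m : V, T.dist a m + T.dist m b = T.dist a b ∧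
      T.dist u a = T.dist u m + T.dist m a ∧
      T.dist u b = T.dist u m + T.dist m b := by
  suffices H : ∀ n u, T.dist u a + T.dist u b = n →
      ∃ m : V, T.dist a m + T.dist m b = T.dist a b ∧
        T.dist u a = T.dist u m + T.dist m a ∧
        T.dist u b = T.dist u m + T.dist m b from H _ u rfl
  intro n
  induction n using Nat.strong_induction_on with
  | _ n ih =>
  intro u hu
  obtain ⟨P, hPp, hPl⟩ := hT.isConnected.exists_path_of_dist u a
  obtain ⟨Q, hQp, hQl⟩ := hT.isConnected.exists_path_of_dist u b
  by_cases hW : (P.reverse.append Q).IsPath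
  · refine ⟨u, ?_, by simp, by simp⟩
    have h1 := tree_path_length hT _ hW
    rw [SimpleGraph.Walk.length_append, SimpleGraph.Walk.length_reverse, hPl, hQl] at h1
    have : T.dist a u = T.dist u a := SimpleGraph.dist_comm
    omega
  · rw [SimpleGraph.Walk.isPath_def, SimpleGraph.Walk.support_append, List.nodup_append] at hW
    push_neg at hW
    have hPrev : P.reverse.support.Nodup := by
      rw [SimpleGraph.Walk.support_reverse]
      exact List.nodup_reverse.mpr hPp.support_nodup
    obtain ⟨z, hzP', hzQ⟩ := by
      rcases hW hPrev hQp.support_nodup.tail with h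
      simpa [List.Disjoint, SimpleGraph.Walk.support_reverse] using h
    have hzQ' : z ∈ Q.support := List.mem_of_mem_tail hzQ
    have hzu : z ≠ u := by
      rintro rfl
      have hn := hQp.support_nodup
      rw [Q.support_eq_cons] at hn
      exact (List.nodup_cons.mp hn).1 hzQ
    have e1 := support_dist hT P hPp hzP'
    have e2 := support_dist hT Q hQp hzQ'
    have e4 : 0 < T.dist u z := hT.isConnected.pos_dist_of_ne (Ne.symm hzu)
    have e5 : T.dist z u = T.dist u z := SimpleGraph.dist_comm
    have hlt : T.dist z a + T.dist z b < n := by omega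
    obtain ⟨m, hm1, hm2, hm3⟩ := ih _ hlt z rfl
    have t1 : T.dist u a ≤ T.dist u m + T.dist m a := hT.isConnected.dist_triangle
    have t2 : T.dist u b ≤ T.dist u m + T.dist m b := hT.isConnected.dist_triangle
    have t3 : T.dist u m ≤ T.dist u z + T.dist z m := hT.isConnected.dist_triangle
    refine ⟨m, hm1, ?_, ?_⟩ <;> omega

lemma two_fermatDist [Fintype V] (hT : T.IsTree) (u a b : V) :
    2 * fermatDist T u a b = T.dist u a + T.dist u b + T.dist a b := by
  have hne : Nonempty V := ⟨u⟩
  obtain ⟨m, hm1, hm2, hm3⟩ := exists_median hT u a b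
  have hub : fermatDist T u a b ≤ T.dist m u + T.dist m a + T.dist m b :=
    ciInf_le (OrderBot.bddBelow _) m
  obtain ⟨σ, hσ⟩ := Nat.sInf_mem
    (Set.range_nonempty (fun σ : V => T.dist σ u + T.dist σ a + T.dist σ b))
  have hval : T.dist σ u + T.dist σ a + T.dist σ b = fermatDist T u a b := hσ
  have t1 : T.dist u a ≤ T.dist σ u + T.dist σ a := by
    have := hT.isConnected.dist_triangle (u := u) (v := σ) (w := a)
    have h : T.dist u σ = T.dist σ u := SimpleGraph.dist_comm
    omega
  have t2 : T.dist u b ≤ T.dist σ u + T.dist σ b := by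
    have := hT.isConnected.dist_triangle (u := u) (v := σ) (w := b)
    have h : T.dist u σ = T.dist σ u := SimpleGraph.dist_comm
    omega
  have t3 : T.dist a b ≤ T.dist σ a + T.dist σ b := by
    have := hT.isConnected.dist_triangle (u := a) (v := σ) (w := b)
    have h : T.dist a σ = T.dist σ a := SimpleGraph.dist_comm
    omega
  have c1 : T.dist m u = T.dist u m := SimpleGraph.dist_comm
  have c2 : T.dist a m = T.dist m a := SimpleGraph.dist_comm
  omega
end Aux

set_option maxHeartbeats 1000000 in
/-- In a finite tree, a vertex at maximum distance from `u` can be chosen as one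
of the Fermat eccentric vertices of `u`. -/
theorem exists_fermat_eccentric_vertices_with_farthest [Fintype V] (T : SimpleGraph V)
    (hT : T.IsTree) (u : V) :
    ∃ v w : V, fermatDist T u v w = fermatEcc T u ∧ T.dist u v = ecc2 T u := by
  classical
  have hne : Nonempty V := ⟨u⟩
  obtain ⟨v, -, hv⟩ := Finset.exists_mem_eq_sup (univ : Finset V) ⟨u, mem_univ u⟩
    (fun x => T.dist u x)
  obtain ⟨p, -, hp⟩ := Finset.exists_mem_eq_sup (univ : Finset (V × V)) ⟨(u, u), mem_univ _⟩
    (fun p : V × V => fermatDist T u p.1 p.2)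
  obtain ⟨a, b⟩ := p
  simp only at hp
  -- v is farthest
  have hfar : ∀ x : V, T.dist u x ≤ T.dist u v := fun x => hv ▸ Finset.le_sup (mem_univ x)
  have hfa : T.dist u a ≤ T.dist u v := hfar a
  have hfb : T.dist u b ≤ T.dist u v := hfar b
  -- sup bounds
  have hEcc : fermatEcc T u = fermatDist T u a b := by rw [fermatEcc]; exact hp
  have hv' : T.dist u v = ecc2 T u := by rw [ecc2]; exact hv.symm
  have hsa : fermatDist T u v a ≤ fermatEcc T u := by
    rw [fermatEcc]
    have h := Finset.le_sup (f := fun p : V × V => fermatDist T u p.1 p.2) (b := (v, a))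
      (mem_univ _)
    simpa using h
  have hsb : fermatDist T u v b ≤ fermatEcc T u := by
    rw [fermatEcc]
    have h := Finset.le_sup (f := fun p : V × V => fermatDist T u p.1 p.2) (b := (v, b))
      (mem_univ _)
    simpa using h
  -- medians
  obtain ⟨m, hm1, hm2, hm3⟩ := exists_median hT u a b
  obtain ⟨n, hn1, hn2, hn3⟩ := exists_median hT v a b
  -- both lie on the a-b geodesic path
  obtain ⟨P, hPp, hPl⟩ := hT.isConnected.exists_path_of_dist a b
  have hmP : m ∈ P.support := mem_path_of_between hT hm1 P hPp
  have hnP : n ∈ P.support := mem_path_of_between hT hn1 P hPp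
  -- collinearity of m, n
  have hcol : T.dist a m + T.dist m n = T.dist a n ∨
      T.dist n m + T.dist m b = T.dist n b := by
    have hsplit : m ∈ (P.takeUntil n hnP).support ∨ m ∈ (P.dropUntil n hnP).support := by
      rw [← SimpleGraph.Walk.mem_support_append_iff, P.take_spec hnP]; exact hmP
    rcases hsplit with h | h
    · exact Or.inl (support_dist hT _ (hPp.takeUntil hnP) h)
    · exact Or.inr (support_dist hT _ (hPp.dropUntil hnP) h)
  -- fermat formulas
  have F0 := two_fermatDist hT u a b
  have F1 := two_fermatDist hT u v a
  have F2 := two_fermatDist hT u v b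
  -- triangles
  have t1 : T.dist u v ≤ T.dist u m + T.dist m v := hT.isConnected.dist_triangle
  have t2 : T.dist m v ≤ T.dist m n + T.dist n v := hT.isConnected.dist_triangle
  -- comm facts
  have c1 : T.dist v a = T.dist a v := SimpleGraph.dist_comm
  have c2 : T.dist v b = T.dist b v := SimpleGraph.dist_comm
  have c3 : T.dist n v = T.dist v n := SimpleGraph.dist_comm
  have c4 : T.dist n a = T.dist a n := SimpleGraph.dist_comm
  have c5 : T.dist n b = T.dist b n := SimpleGraph.dist_comm
  have c6 : T.dist m a = T.dist a m := SimpleGraph.dist_comm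
  have c7 : T.dist m b = T.dist b m := SimpleGraph.dist_comm
  have c8 : T.dist m n = T.dist n m := SimpleGraph.dist_comm
  rcases hcol with h | h
  · refine ⟨v, a, le_antisymm hsa ?_, hv'⟩
    rw [hEcc]
    omega
  · refine ⟨v, b, le_antisymm hsb ?_, hv'⟩
    rw [hEcc]
    omega
end

section
/- Let T be a finite tree of diameter d and let P = v₀v₁⋯v_d be a diametrical path of T containing all central vertices of T. Then the Fermat eccentricity is symmetric along P: for all i = 0, 1, …, d, ε₃(v_i; T) = ε₃(v_{d−i}; T). -/
open SimpleGraph Finset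

variable {V : Type*}

section FermatAux

variable {T : SimpleGraph V}

lemma tree_path_length_eq_dist (hT : T.IsTree) {x y : V} (p : T.Walk x y) (hp : p.IsPath) :
    p.length = T.dist x y := by
  classical
  obtain ⟨q, hq⟩ := hT.isConnected.exists_walk_length_eq_dist x y
  have huniq := isAcyclic_iff_path_unique.mp hT.IsAcyclic
    (⟨p, hp⟩ : T.Path x y) ⟨q.bypass, q.bypass_isPath⟩
  have h1 : p.length = q.bypass.length := by
    rw [show p = q.bypass from congrArg Subtype.val huniq]
  refine le_antisymm ?_ (SimpleGraph.dist_le p)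
  calc p.length = q.bypass.length := h1
    _ ≤ q.length := q.length_bypass_le
    _ = T.dist x y := hq

lemma path_getVert_inj {x y : V} (p : T.Walk x y) (hp : p.IsPath) :
    ∀ m n, m ≤ p.length → n ≤ p.length → p.getVert m = p.getVert n → m = n := by
  classical
  induction p with
  | nil => intro m n hm hn _; simp at hm hn; omega
  | cons h q ih =>
    rw [SimpleGraph.Walk.cons_isPath_iff] at hp
    intro m n hm hn he
    match m, n with
    | 0, 0 => rfl
    | 0, n+1 =>
      exfalso
      apply hp.2
      rw [SimpleGraph.Walk.mem_support_iff_exists_getVert]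
      refine ⟨n, ?_, by simpa using hn⟩
      simpa using he.symm
    | m+1, 0 =>
      exfalso
      apply hp.2
      rw [SimpleGraph.Walk.mem_support_iff_exists_getVert]
      refine ⟨m, ?_, by simpa using hm⟩
      simpa using he
    | m+1, n+1 =>
      have := ih hp.1 m n (by simpa using hm) (by simpa using hn) (by simpa using he)
      omega

lemma concat_isPath {x u z : V} (q : T.Walk x u) (hq : q.IsPath) (h : T.Adj u z)
    (hz : z ∉ q.support) : (q.concat h).IsPath := by
  rw [← SimpleGraph.Walk.isPath_reverse_iff, SimpleGraph.Walk.reverse_concat,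
    SimpleGraph.Walk.cons_isPath_iff]
  exact ⟨hq.reverse, by simpa [SimpleGraph.Walk.support_reverse] using hz⟩

lemma tree_adj_dist (hT : T.IsTree) {u z : V} (h : T.Adj u z) (x : V) :
    T.dist x z = T.dist x u + 1 ∨ T.dist x u = T.dist x z + 1 := by
  classical
  obtain ⟨q, hq⟩ := hT.isConnected.exists_walk_length_eq_dist x z
  set p := q.bypass with hpdef
  have hp : p.IsPath := q.bypass_isPath
  have hplen : p.length = T.dist x z := tree_path_length_eq_dist hT p hp
  have hdz : T.dist u z = 1 := by
    refine le_antisymm ?_ (hT.isConnected.pos_dist_of_ne h.ne)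
    simpa using SimpleGraph.dist_le h.toWalk
  by_cases hu : u ∈ p.support
  · left
    have h1 := tree_path_length_eq_dist hT (p.takeUntil u hu) (hp.takeUntil hu)
    have h2 := tree_path_length_eq_dist hT (p.dropUntil u hu) (hp.dropUntil hu)
    have h3 : (p.takeUntil u hu).length + (p.dropUntil u hu).length = p.length := by
      rw [← SimpleGraph.Walk.length_append, SimpleGraph.Walk.take_spec]
    omega
  · right
    have hpath := concat_isPath p hp (h.symm) hu
    have h1 := tree_path_length_eq_dist hT (p.concat h.symm) hpath
    rw [SimpleGraph.Walk.length_concat] at h1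
    omega

lemma tree_second_vertex (hT : T.IsTree) {u z : V} (h : T.Adj u z) (x : V)
    (hd : T.dist x u + 1 = T.dist x z) {p : T.Walk x z} (hp : p.IsPath) :
    p.reverse.getVert 1 = u := by
  classical
  obtain ⟨q0, hq0⟩ := hT.isConnected.exists_walk_length_eq_dist x u
  set q := q0.bypass with hqdef
  have hqp : q.IsPath := q0.bypass_isPath
  have hqlen : q.length = T.dist x u := tree_path_length_eq_dist hT q hqp
  have hz : z ∉ q.support := by
    intro hmem
    have h1 := tree_path_length_eq_dist hT (q.takeUntil z hmem) (hqp.takeUntil hmem)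
    have h2 := SimpleGraph.Walk.length_takeUntil_le q hmem
    omega
  have hpath := concat_isPath q hqp h hz
  have huniq := isAcyclic_iff_path_unique.mp hT.IsAcyclic
    (⟨p, hp⟩ : T.Path x z) ⟨q.concat h, hpath⟩
  have hpe : p = q.concat h := congrArg Subtype.val huniq
  rw [hpe, SimpleGraph.Walk.reverse_concat]
  simp [SimpleGraph.Walk.getVert_cons_succ]

lemma tree_no_local_max (hT : T.IsTree) {x y : V} (p : T.Walk x y) (hp : p.IsPath) (x0 : V)
    {k : ℕ} (hk : k + 2 ≤ p.length) :
    ¬ (T.dist x0 (p.getVert k) + 1 = T.dist x0 (p.getVert (k+1)) ∧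
       T.dist x0 (p.getVert (k+2)) + 1 = T.dist x0 (p.getVert (k+1))) := by
  classical
  rintro ⟨h1, h2⟩
  have a1 : T.Adj (p.getVert k) (p.getVert (k+1)) := p.adj_getVert_succ (by omega)
  have a2 : T.Adj (p.getVert (k+2)) (p.getVert (k+1)) :=
    (p.adj_getVert_succ (i := k+1) (by omega)).symm
  obtain ⟨r0, _⟩ := hT.isConnected.exists_walk_length_eq_dist x0 (p.getVert (k+1))
  have hrp : r0.bypass.IsPath := r0.bypass_isPath
  have e1 := tree_second_vertex hT a1 x0 h1 hrp
  have e2 := tree_second_vertex hT a2 x0 h2 hrp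
  have : p.getVert k = p.getVert (k+2) := by rw [← e1, ← e2]
  have := path_getVert_inj p hp k (k+2) (by omega) (by omega) this
  omega

lemma unimodal_aux {f : ℕ → ℕ} {d : ℕ}
    (step : ∀ k, k < d → f (k+1) = f k + 1 ∨ f k = f (k+1) + 1)
    (nomax : ∀ k, k + 2 ≤ d → ¬ (f k + 1 = f (k+1) ∧ f (k+2) + 1 = f (k+1))) :
    ∃ j ≤ d, (∀ k, j ≤ k → k ≤ d → f k = f j + (k - j)) ∧
      (∀ k, k ≤ j → f k = f j + (j - k)) := by
  obtain ⟨j, hjmem, hjmin⟩ :=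
    Finset.exists_min_image (Finset.range (d+1)) f ⟨0, by simp⟩
  rw [Finset.mem_range] at hjmem
  have hjd : j ≤ d := by omega
  have hmin : ∀ k ≤ d, f j ≤ f k := fun k hk =>
    hjmin k (Finset.mem_range.mpr (by omega))
  refine ⟨j, hjd, ?_, ?_⟩
  · have up : ∀ k, j ≤ k → k < d → f (k+1) = f k + 1 := by
      intro k hk
      induction k, hk using Nat.le_induction with
      | base =>
        intro hjd'
        rcases step j hjd' with h | h
        · exact h
        · have := hmin (j+1) (by omega); omega
      | succ k hk ih =>
        intro hkd
        have hih : f (k+1) = f k + 1 := ih (by omega)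
        rcases step (k+1) hkd with h | h
        · exact h
        · have h' : f (k+1) = f (k+2) + 1 := h
          exfalso
          exact nomax k (by omega) ⟨by omega, by omega⟩
    intro k hk hkd
    induction k, hk using Nat.le_induction with
    | base => omega
    | succ k hk ih =>
      have h1 : f (k+1) = f k + 1 := up k hk (by omega)
      have h2 := ih (by omega)
      omega
  · have down : ∀ m k, k < j → j - k = m → f k = f (k+1) + 1 := by
      intro m
      induction m with
      | zero => intro k hk he; omega
      | succ n ih =>
        intro k hk he
        by_cases hkj : k + 1 = j
        · rcases step k (by omega) with h | h
          · exfalso; rw [hkj] at h; have := hmin k (by omega); omega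
          · exact h
        · have hnext : f (k+1) = f (k+2) + 1 := ih (k+1) (by omega) (by omega)
          rcases step k (by omega) with h | h
          · exfalso; exact nomax k (by omega) ⟨by omega, by omega⟩
          · exact h
    have acc : ∀ m k, k + m = j → f k = f j + m := by
      intro m
      induction m with
      | zero =>
        intro k hk
        have hkj : k = j := by omega
        subst hkj
        rfl
      | succ n ih =>
        intro k hk
        have h1 := down (j - k) k (by omega) rfl
        have h2 : f (k+1) = f j + n := ih (k+1) (by omega)
        omega
    intro k hk
    have := acc (j - k) k (by omega)
    omega

lemma tree_attach (hT : T.IsTree) {x y : V} (p : T.Walk x y) (hp : p.IsPath) (x0 : V) :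
    ∃ j ≤ p.length,
      (∀ k, j ≤ k → k ≤ p.length →
        T.dist x0 (p.getVert k) = T.dist x0 (p.getVert j) + (k - j)) ∧
      (∀ k, k ≤ j → T.dist x0 (p.getVert k) = T.dist x0 (p.getVert j) + (j - k)) := by
  apply unimodal_aux (f := fun k => T.dist x0 (p.getVert k)) (d := p.length)
  · intro k hk
    exact tree_adj_dist hT (p.adj_getVert_succ hk) x0
  · intro k hk
    exact tree_no_local_max hT p hp x0 hk

lemma fermatDist_le_cost (u v w σ : V) :
    fermatDist T u v w ≤ T.dist σ u + T.dist σ v + T.dist σ w :=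
  ciInf_le (OrderBot.bddBelow _) σ

lemma le_fermatDist (hconn : T.Connected) {u v w : V} {n : ℕ}
    (h : n + n ≤ T.dist u v + T.dist u w + T.dist v w) : n ≤ fermatDist T u v w := by
  have : Nonempty V := ⟨u⟩
  refine le_ciInf fun σ => ?_
  have t1 : T.dist u v ≤ T.dist u σ + T.dist σ v := hconn.dist_triangle
  have t2 : T.dist u w ≤ T.dist u σ + T.dist σ w := hconn.dist_triangle
  have t3 : T.dist v w ≤ T.dist v σ + T.dist σ w := hconn.dist_triangle
  rw [SimpleGraph.dist_comm (G := T) (u := u) (v := σ)] at t1 t2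
  rw [SimpleGraph.dist_comm (G := T) (u := v) (v := σ)] at t3
  omega

lemma fermatEcc_le [Fintype V] {u : V} {m : ℕ}
    (h : ∀ v w : V, fermatDist T u v w ≤ m) : fermatEcc T u ≤ m :=
  Finset.sup_le fun p _ => h p.1 p.2

lemma le_fermatEcc [Fintype V] {u : V} (v w : V) :
    fermatDist T u v w ≤ fermatEcc T u := by
  have := Finset.le_sup (f := fun p : V × V => fermatDist T u p.1 p.2) (Finset.mem_univ (v, w))
  exact this

end FermatAux

noncomputable def Mfour [Fintype V] (J A : V → ℕ) (d i : ℕ) : ℕ :=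
  max (max (Finset.univ.sup fun x => if J x ≤ i then i + A x else 0)
           (Finset.univ.sup fun x => if i ≤ J x then (d - i) + A x else 0))
      (max (Finset.univ.sup fun x => if J x ≤ i then A x + (d - J x) else 0)
           (Finset.univ.sup fun x => if i ≤ J x then A x + J x else 0))

section Mfour

variable [Fintype V] {J A : V → ℕ} {d i : ℕ}

lemma le_Mfour_A {x : V} (h : J x ≤ i) : i + A x ≤ Mfour J A d i := by
  refine le_trans ?_ (le_max_of_le_left (le_max_left _ _))
  have := Finset.le_sup (f := fun x => if J x ≤ i then i + A x else 0) (Finset.mem_univ x)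
  simpa [h] using this

lemma le_Mfour_B {x : V} (h : i ≤ J x) : (d - i) + A x ≤ Mfour J A d i := by
  refine le_trans ?_ (le_max_of_le_left (le_max_right _ _))
  have := Finset.le_sup (f := fun x => if i ≤ J x then (d - i) + A x else 0) (Finset.mem_univ x)
  simpa [h] using this

lemma le_Mfour_C {x : V} (h : J x ≤ i) : A x + (d - J x) ≤ Mfour J A d i := by
  refine le_trans ?_ (le_max_of_le_right (le_max_left _ _))
  have := Finset.le_sup (f := fun x => if J x ≤ i then A x + (d - J x) else 0) (Finset.mem_univ x)
  simpa [h] using this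

lemma le_Mfour_D {x : V} (h : i ≤ J x) : A x + J x ≤ Mfour J A d i := by
  refine le_trans ?_ (le_max_of_le_right (le_max_right _ _))
  have := Finset.le_sup (f := fun x => if i ≤ J x then A x + J x else 0) (Finset.mem_univ x)
  simpa [h] using this

lemma Mfour_le {m : ℕ}
    (hA : ∀ x, J x ≤ i → i + A x ≤ m)
    (hB : ∀ x, i ≤ J x → (d - i) + A x ≤ m)
    (hC : ∀ x, J x ≤ i → A x + (d - J x) ≤ m)
    (hD : ∀ x, i ≤ J x → A x + J x ≤ m) : Mfour J A d i ≤ m := by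
  refine max_le (max_le ?_ ?_) (max_le ?_ ?_) <;>
    refine Finset.sup_le fun x _ => ?_ <;> split_ifs with h
  · exact hA x h
  · exact Nat.zero_le m
  · exact hB x h
  · exact Nat.zero_le m
  · exact hC x h
  · exact Nat.zero_le m
  · exact hD x h
  · exact Nat.zero_le m

lemma Mfour_symm (hAJ : ∀ x, A x ≤ J x ∧ A x + J x ≤ d)
    {x0 xd : V} (h0 : J x0 = 0 ∧ A x0 = 0) (hd : J xd = d ∧ A xd = 0)
    (h2 : i + i ≤ d) : Mfour J A d i = Mfour J A d (d - i) := by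
  have hJd : ∀ x, J x ≤ d := fun x => by have := (hAJ x).2; omega
  have hdM : ∀ i', i' ≤ d → d ≤ Mfour J A d i' := by
    intro i' hi'
    have hd1 := hd.1
    have hd2 := hd.2
    have := le_Mfour_D (J := J) (A := A) (d := d) (i := i') (x := xd) (by omega)
    omega
  refine le_antisymm ?_ ?_
  · refine Mfour_le ?_ ?_ ?_ ?_ <;> intro x hx
    · exact le_trans (by have := (hAJ x).1; omega) (hdM (d - i) (by omega))
    · rcases le_or_gt (J x) (d - i) with h | h
      · exact le_Mfour_A h
      · exact le_trans (by have := (hAJ x).2; omega) (hdM (d - i) (by omega))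
    · exact le_trans (by have h1 := (hAJ x).1; have h2 := hJd x; omega) (hdM (d - i) (by omega))
    · rcases le_or_gt (d - i) (J x) with h | h
      · exact le_Mfour_D h
      · exact le_trans ((hAJ x).2) (hdM (d - i) (by omega))
  · refine Mfour_le ?_ ?_ ?_ ?_ <;> intro x hx
    · rcases le_or_gt i (J x) with h | h
      · exact le_Mfour_B h
      · exact le_trans (by have := (hAJ x).1; omega) (hdM i (by omega))
    · have h1 := (hAJ x).2
      refine le_trans ?_ (hdM i (by omega))
      omega
    · exact le_trans (by have := (hAJ x).1; have := hJd x; omega) (hdM i (by omega))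
    · exact le_trans ((hAJ x).2) (hdM i (by omega))

end Mfour

lemma fermatEcc_symm_key [Fintype V] (T : SimpleGraph V) (hT : T.IsTree) {v₀ vd : V}
    (P : T.Walk v₀ vd) (hP : P.IsPath) (d : ℕ) (hlen : P.length = d) (hdiam : d = gdiam T)
    (i : ℕ) (h2 : i + i ≤ d) :
    fermatEcc T (P.getVert i) = fermatEcc T (P.getVert (d - i)) := by
  classical
  have hconn := hT.isConnected
  have hid : i ≤ d := by omega
  have hatt : ∀ x : V, ∃ j, j ≤ d ∧
      (∀ k, j ≤ k → k ≤ d → T.dist x (P.getVert k) = T.dist x (P.getVert j) + (k - j)) ∧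
      (∀ k, k ≤ j → T.dist x (P.getVert k) = T.dist x (P.getVert j) + (j - k)) := by
    intro x
    have := tree_attach hT P hP x
    rw [hlen] at this
    obtain ⟨j, hj, hu, hd'⟩ := this
    exact ⟨j, hj, hu, hd'⟩
  choose J hJd Fup Fdown using hatt
  set Af : V → ℕ := fun x => T.dist x (P.getVert (J x)) with hAf
  have FU : ∀ x k, J x ≤ k → k ≤ d → T.dist x (P.getVert k) = Af x + (k - J x) := Fup
  have FD : ∀ x k, k ≤ J x → T.dist x (P.getVert k) = Af x + (J x - k) := Fdown
  have hdle : ∀ a b : V, T.dist a b ≤ d := by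
    intro a b
    rw [hdiam]
    exact Finset.le_sup (f := fun p : V × V => T.dist p.1 p.2) (Finset.mem_univ (a, b))
  have hAJ : ∀ x, Af x ≤ J x ∧ Af x + J x ≤ d := by
    intro x
    have h0 := FD x 0 (Nat.zero_le _)
    have hdd := FU x d (hJd x) le_rfl
    have b0 := hdle x (P.getVert 0)
    have bd := hdle x (P.getVert d)
    have := hJd x
    omega
  have hgv : ∀ m, m ≤ d → J (P.getVert m) = m ∧ Af (P.getVert m) = 0 := by
    intro m hm
    have hself : T.dist (P.getVert m) (P.getVert m) = 0 := by simp
    rcases le_total m (J (P.getVert m)) with h | h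
    · have h1 := FD (P.getVert m) m h
      rw [hself] at h1
      omega
    · have h1 := FU (P.getVert m) m h hm
      rw [hself] at h1
      omega
  have hgeo : ∀ m n, m ≤ n → n ≤ d → T.dist (P.getVert m) (P.getVert n) = n - m := by
    intro m n hmn hnd
    obtain ⟨hJm, hAm⟩ := hgv m (le_trans hmn hnd)
    have h1 := FU (P.getVert m) n (by omega) hnd
    rw [hJm, hAm] at h1
    omega
  have lower : ∀ i', i' ≤ d → Mfour J Af d i' ≤ fermatEcc T (P.getVert i') := by
    intro i' hi'
    refine Mfour_le ?_ ?_ ?_ ?_ <;> intro x hx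
    · refine le_trans ?_ (le_fermatEcc (P.getVert 0) x)
      refine le_fermatDist hconn ?_
      have e1 : T.dist (P.getVert i') (P.getVert 0) = i' := by
        rw [SimpleGraph.dist_comm]
        simpa using hgeo 0 i' (Nat.zero_le _) hi'
      have e2 : T.dist (P.getVert i') x = Af x + (i' - J x) := by
        rw [SimpleGraph.dist_comm]; exact FU x i' hx hi'
      have e3 : T.dist (P.getVert 0) x = Af x + J x := by
        rw [SimpleGraph.dist_comm]
        have := FD x 0 (Nat.zero_le _)
        omega
      omega
    · refine le_trans ?_ (le_fermatEcc (P.getVert d) x)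
      refine le_fermatDist hconn ?_
      have e1 : T.dist (P.getVert i') (P.getVert d) = d - i' := hgeo i' d hi' le_rfl
      have e2 : T.dist (P.getVert i') x = Af x + (J x - i') := by
        rw [SimpleGraph.dist_comm]; exact FD x i' hx
      have e3 : T.dist (P.getVert d) x = Af x + (d - J x) := by
        rw [SimpleGraph.dist_comm]; exact FU x d (hJd x) le_rfl
      have := hJd x
      omega
    · refine le_trans ?_ (le_fermatEcc (P.getVert d) x)
      refine le_fermatDist hconn ?_
      have e1 : T.dist (P.getVert i') (P.getVert d) = d - i' := hgeo i' d hi' le_rfl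
      have e2 : T.dist (P.getVert i') x = Af x + (i' - J x) := by
        rw [SimpleGraph.dist_comm]; exact FU x i' hx hi'
      have e3 : T.dist (P.getVert d) x = Af x + (d - J x) := by
        rw [SimpleGraph.dist_comm]; exact FU x d (hJd x) le_rfl
      have := hJd x
      omega
    · refine le_trans ?_ (le_fermatEcc (P.getVert 0) x)
      refine le_fermatDist hconn ?_
      have e1 : T.dist (P.getVert i') (P.getVert 0) = i' := by
        rw [SimpleGraph.dist_comm]
        simpa using hgeo 0 i' (Nat.zero_le _) hi'
      have e2 : T.dist (P.getVert i') x = Af x + (J x - i') := by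
        rw [SimpleGraph.dist_comm]; exact FD x i' hx
      have e3 : T.dist (P.getVert 0) x = Af x + J x := by
        rw [SimpleGraph.dist_comm]
        have := FD x 0 (Nat.zero_le _)
        omega
      omega
  have upper : ∀ i', i' ≤ d → fermatEcc T (P.getVert i') ≤ Mfour J Af d i' := by
    intro i' hi'
    refine fermatEcc_le fun v w => ?_
    rcases le_or_gt (J v) i' with hjv | hjv <;> rcases le_or_gt (J w) i' with hjw | hjw
    · rcases le_total (J v) (J w) with hvw | hvw
      · refine le_trans (fermatDist_le_cost _ _ _ (P.getVert (J w)))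
          (le_trans ?_ (le_Mfour_A hjw))
        have c1 : T.dist (P.getVert (J w)) (P.getVert i') = i' - J w := hgeo (J w) i' hjw hi'
        have c2 : T.dist (P.getVert (J w)) v = Af v + (J w - J v) := by
          rw [SimpleGraph.dist_comm]; exact FU v (J w) hvw (le_trans hjw hi')
        have c3 : T.dist (P.getVert (J w)) w = Af w := by
          rw [SimpleGraph.dist_comm]
        have hAv := (hAJ v).1
        omega
      · refine le_trans (fermatDist_le_cost _ _ _ (P.getVert (J v)))
          (le_trans ?_ (le_Mfour_A hjv))
        have c1 : T.dist (P.getVert (J v)) (P.getVert i') = i' - J v := hgeo (J v) i' hjv hi'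
        have c2 : T.dist (P.getVert (J v)) v = Af v := by
          rw [SimpleGraph.dist_comm]
        have c3 : T.dist (P.getVert (J v)) w = Af w + (J v - J w) := by
          rw [SimpleGraph.dist_comm]; exact FU w (J v) hvw (le_trans hjv hi')
        have hAw := (hAJ w).1
        omega
    · refine le_trans (fermatDist_le_cost _ _ _ (P.getVert i'))
        (le_trans ?_ (le_Mfour_D (le_of_lt hjw)))
      have c1 : T.dist (P.getVert i') (P.getVert i') = 0 := by simp
      have c2 : T.dist (P.getVert i') v = Af v + (i' - J v) := by
        rw [SimpleGraph.dist_comm]; exact FU v i' hjv hi'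
      have c3 : T.dist (P.getVert i') w = Af w + (J w - i') := by
        rw [SimpleGraph.dist_comm]; exact FD w i' (le_of_lt hjw)
      have hAv := (hAJ v).1
      omega
    · refine le_trans (fermatDist_le_cost _ _ _ (P.getVert i'))
        (le_trans ?_ (le_Mfour_D (le_of_lt hjv)))
      have c1 : T.dist (P.getVert i') (P.getVert i') = 0 := by simp
      have c2 : T.dist (P.getVert i') v = Af v + (J v - i') := by
        rw [SimpleGraph.dist_comm]; exact FD v i' (le_of_lt hjv)
      have c3 : T.dist (P.getVert i') w = Af w + (i' - J w) := by
        rw [SimpleGraph.dist_comm]; exact FU w i' hjw hi'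
      have hAw := (hAJ w).1
      omega
    · rcases le_total (J v) (J w) with hvw | hvw
      · refine le_trans (fermatDist_le_cost _ _ _ (P.getVert (J v)))
          (le_trans ?_ (le_Mfour_B (le_of_lt hjv)))
        have c1 : T.dist (P.getVert (J v)) (P.getVert i') = J v - i' := by
          rw [SimpleGraph.dist_comm]; exact hgeo i' (J v) (le_of_lt hjv) (hJd v)
        have c2 : T.dist (P.getVert (J v)) v = Af v := by
          rw [SimpleGraph.dist_comm]
        have c3 : T.dist (P.getVert (J v)) w = Af w + (J w - J v) := by
          rw [SimpleGraph.dist_comm]; exact FD w (J v) hvw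
        have hAw := (hAJ w).2
        have := hJd v
        omega
      · refine le_trans (fermatDist_le_cost _ _ _ (P.getVert (J w)))
          (le_trans ?_ (le_Mfour_B (le_of_lt hjw)))
        have c1 : T.dist (P.getVert (J w)) (P.getVert i') = J w - i' := by
          rw [SimpleGraph.dist_comm]; exact hgeo i' (J w) (le_of_lt hjw) (hJd w)
        have c2 : T.dist (P.getVert (J w)) v = Af v + (J v - J w) := by
          rw [SimpleGraph.dist_comm]; exact FD v (J w) hvw
        have c3 : T.dist (P.getVert (J w)) w = Af w := by
          rw [SimpleGraph.dist_comm]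
        have hAv := (hAJ v).2
        have := hJd w
        omega
  have h0 := hgv 0 (Nat.zero_le _)
  have hdd := hgv d le_rfl
  have hsymm := Mfour_symm hAJ h0 hdd h2
  exact le_antisymm
    (le_trans (upper i hid) (le_trans (le_of_eq hsymm) (lower (d - i) (by omega))))
    (le_trans (upper (d - i) (by omega)) (le_trans (le_of_eq hsymm.symm) (lower i hid)))

/-- Along a diametrical path `v₀v₁⋯v_d` of a finite tree containing all central
vertices, the Fermat eccentricity is symmetric: `ε₃(vᵢ) = ε₃(v_{d-i})` for all `0 ≤ i ≤ d`. -/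
theorem fermatEcc_symmetric_on_diametrical_path [Fintype V] (T : SimpleGraph V) (hT : T.IsTree)
    {v₀ vd : V} (P : T.Walk v₀ vd) (hP : P.IsPath) (d : ℕ) (hlen : P.length = d)
    (hdiam : d = gdiam T)
    (hcentral : ∀ c : V, isCentral T c → ∃ i ≤ d, P.getVert i = c)
    (i : ℕ) (hi : i ≤ d) :
    fermatEcc T (P.getVert i) = fermatEcc T (P.getVert (d - i)) := by
  rcases le_or_gt (i + i) d with h | h
  · exact fermatEcc_symm_key T hT P hP d hlen hdiam i h
  · have h2 : (d - i) + (d - i) ≤ d := by omega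
    have := fermatEcc_symm_key T hT P hP d hlen hdiam (d - i) h2
    rw [show d - (d - i) = i by omega] at this
    exact this.symm
end

section
/- Let T be a finite tree of diameter d and let P = v₀v₁⋯v_d be a diametrical path of T containing all central vertices of T. Then for each i with 0 ≤ i ≤ ⌊d/2⌋ − 1, one has ε₃(v_{i+1};T) ≤ ε₃(v_i;T) ≤ ε₃(v_{i+1};T) + 1, and for each i with ⌊d/2⌋ ≤ i ≤ d − 1, one has ε₃(v_i;T) ≤ ε₃(v_{i+1};T) ≤ ε₃(v_i;T) + 1. Consequently, among the vertices of P, the central vertices attain the minimum Fermat eccentricity. -/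
open SimpleGraph Finset

variable {V : Type*}

section Aux
variable {V : Type*} {T : SimpleGraph V}

/-- In a tree, every path realizes the distance. -/
lemma tree_path_length_s4 (hT : T.IsTree) {u v : V} (p : T.Walk u v) (hp : p.IsPath) :
    p.length = T.dist u v := by
  obtain ⟨q, hq, hql⟩ := (hT.isConnected u v).exists_path_of_dist
  have := hT.IsAcyclic.path_unique ⟨p, hp⟩ ⟨q, hq⟩
  rw [Subtype.mk.injEq] at this
  rw [this, hql]

/-- In a tree, a vertex on a path splits the distance. -/
lemma tree_dist_of_mem [DecidableEq V] (hT : T.IsTree) {u v : V} (p : T.Walk u v) (hp : p.IsPath)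
    {x : V} (hx : x ∈ p.support) :
    T.dist u x + T.dist x v = T.dist u v := by
  have h1 := tree_path_length_s4 hT (p.takeUntil x hx) (hp.takeUntil hx)
  have h2 := tree_path_length_s4 hT (p.dropUntil x hx) (hp.dropUntil hx)
  have h3 := tree_path_length_s4 hT p hp
  have := congr_arg SimpleGraph.Walk.length (p.take_spec hx)
  rw [SimpleGraph.Walk.length_append] at this
  omega

lemma concat_isPath_s4 [DecidableEq V] {u v w : V} (p : T.Walk u v) (hp : p.IsPath)
    (h : T.Adj v w) (hw : w ∉ p.support) : (p.concat h).IsPath := by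
  apply SimpleGraph.Walk.IsPath.mk'
  rw [SimpleGraph.Walk.support_concat, List.nodup_append]
  exact ⟨hp.support_nodup, List.nodup_singleton w, by intro a ha b hb hab; simp only [List.mem_singleton] at hb; subst hb hab; exact hw ha⟩

/-- In a tree, a vertex farther from `x` than all on a geodesic to `a` is not on it. -/
lemma not_mem_of_dist_lt (hT : T.IsTree) {x a c : V} (p : T.Walk x a) (hp : p.IsPath)
    (hc : p.length < T.dist x c) : c ∉ p.support := by
  classical
  intro hmem
  have h1 := tree_path_length_s4 hT (p.takeUntil c hmem) (hp.takeUntil hmem)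
  have := SimpleGraph.Walk.length_takeUntil_le p hmem
  omega

/-- In a tree, distances from a fixed vertex to two adjacent vertices differ. -/
lemma dist_ne_of_adj (hT : T.IsTree) {x a b : V} (h : T.Adj a b) :
    T.dist x a ≠ T.dist x b := by
  classical
  intro he
  obtain ⟨p, hp, hpl⟩ := (hT.isConnected x a).exists_path_of_dist
  have hb : b ∉ p.support := by
    intro hmem
    have h1 := tree_dist_of_mem hT p hp hmem
    have h2 : 0 < T.dist b a := hT.isConnected.pos_dist_of_ne h.ne'
    omega
  have := tree_path_length_s4 hT (p.concat h) (concat_isPath_s4 p hp h hb)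
  rw [SimpleGraph.Walk.length_concat, hpl] at this
  omega

lemma dist_adj_cases (hT : T.IsTree) {x a b : V} (h : T.Adj a b) :
    T.dist x b = T.dist x a + 1 ∨ T.dist x a = T.dist x b + 1 := by
  have h1 : T.dist x b ≤ T.dist x a + T.dist a b := hT.isConnected.dist_triangle
  have h2 : T.dist x a ≤ T.dist x b + T.dist b a := hT.isConnected.dist_triangle
  have h3 : T.dist a b = 1 := SimpleGraph.dist_eq_one_iff_adj.mpr h
  have h4 : T.dist b a = 1 := SimpleGraph.dist_eq_one_iff_adj.mpr h.symm
  have h5 := dist_ne_of_adj hT (x := x) h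
  omega

/-- In a tree, a vertex has at most one neighbor closer to `x`. -/
lemma unique_descent (hT : T.IsTree) {x a b c : V} (hab : a ≠ b)
    (hac : T.Adj a c) (hbc : T.Adj b c)
    (ha : T.dist x a + 1 = T.dist x c) (hb : T.dist x b + 1 = T.dist x c) : False := by
  classical
  obtain ⟨p, hp, hpl⟩ := (hT.isConnected x a).exists_path_of_dist
  obtain ⟨q, hq, hql⟩ := (hT.isConnected x b).exists_path_of_dist
  have hcp : c ∉ p.support := not_mem_of_dist_lt hT p hp (by omega)
  have hcq : c ∉ q.support := not_mem_of_dist_lt hT q hq (by omega)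
  have heq := hT.IsAcyclic.path_unique ⟨p.concat hac, concat_isPath_s4 p hp hac hcp⟩
    ⟨q.concat hbc, concat_isPath_s4 q hq hbc hcq⟩
  rw [Subtype.mk.injEq] at heq
  have hax : a ∈ (p.concat hac).support := by
    rw [SimpleGraph.Walk.support_concat]
    exact List.mem_append.mpr (Or.inl (SimpleGraph.Walk.end_mem_support p))
  rw [heq, SimpleGraph.Walk.support_concat, List.mem_append] at hax
  rcases hax with hax | hax
  · have h1 := tree_dist_of_mem hT q hq hax
    have h2 : 0 < T.dist a b := hT.isConnected.pos_dist_of_ne hab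
    omega
  · simp only [List.mem_singleton] at hax
    subst hax
    exact hac.ne rfl

lemma dist_getVert_le (hT : T.IsTree) {u v : V} (p : T.Walk u v) (m k : ℕ) :
    T.dist (p.getVert m) (p.getVert (m + k)) ≤ k := by
  induction k with
  | zero => simp
  | succ k ih =>
    have hstep : T.dist (p.getVert (m + k)) (p.getVert (m + k + 1)) ≤ 1 := by
      by_cases hk : m + k < p.length
      · exact le_of_eq (SimpleGraph.dist_eq_one_iff_adj.mpr (p.adj_getVert_succ hk))
      · rw [p.getVert_of_length_le (Nat.le_of_not_lt hk),
          p.getVert_of_length_le (by omega), SimpleGraph.dist_self]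
        exact Nat.zero_le 1
    calc T.dist (p.getVert m) (p.getVert (m + (k + 1)))
        ≤ T.dist (p.getVert m) (p.getVert (m + k))
          + T.dist (p.getVert (m + k)) (p.getVert (m + k + 1)) := by
          have : m + (k + 1) = m + k + 1 := by omega
          rw [this]
          exact hT.isConnected.dist_triangle
      _ ≤ k + 1 := by omega

lemma getVert_coords (hT : T.IsTree) {u v : V} (p : T.Walk u v) (hp : p.IsPath)
    {m : ℕ} (hm : m ≤ p.length) :
    T.dist u (p.getVert m) = m ∧ T.dist (p.getVert m) v = p.length - m := by
  have hL := tree_path_length_s4 hT p hp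
  have h1 : T.dist u (p.getVert m) ≤ m := by
    have := dist_getVert_le hT p 0 m
    rwa [Nat.zero_add, p.getVert_zero] at this
  have h2 : T.dist (p.getVert m) v ≤ p.length - m := by
    have := dist_getVert_le hT p m (p.length - m)
    rwa [show m + (p.length - m) = p.length by omega, p.getVert_length] at this
  have h3 : T.dist u v ≤ T.dist u (p.getVert m) + T.dist (p.getVert m) v :=
    hT.isConnected.dist_triangle
  omega

lemma dist_getVert (hT : T.IsTree) {u v : V} (p : T.Walk u v) (hp : p.IsPath)
    {j m : ℕ} (hjm : j ≤ m) (hm : m ≤ p.length) :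
    T.dist (p.getVert j) (p.getVert m) = m - j := by
  have hL := tree_path_length_s4 hT p hp
  have h1 := (getVert_coords hT p hp (le_trans hjm hm)).1
  have h2 := (getVert_coords hT p hp hm).1
  have h3 : T.dist (p.getVert j) (p.getVert m) ≤ m - j := by
    have := dist_getVert_le hT p j (m - j)
    rwa [show j + (m - j) = m by omega] at this
  have h4 : T.dist u (p.getVert m) ≤ T.dist u (p.getVert j)
      + T.dist (p.getVert j) (p.getVert m) := hT.isConnected.dist_triangle
  omega

lemma getVert_ne (hT : T.IsTree) {u v : V} (p : T.Walk u v) (hp : p.IsPath)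
    {a b : ℕ} (hab : a < b) (hb : b ≤ p.length) : p.getVert a ≠ p.getVert b := by
  intro h
  have := dist_getVert hT p hp (le_of_lt hab) hb
  rw [h, SimpleGraph.dist_self] at this
  omega

lemma no_valley_bump (hT : T.IsTree) {u v : V} (p : T.Walk u v) (hp : p.IsPath) (x : V)
    {a : ℕ} (ha : a + 2 ≤ p.length)
    (h1 : T.dist x (p.getVert a) + 1 = T.dist x (p.getVert (a + 1))) :
    T.dist x (p.getVert (a + 2)) = T.dist x (p.getVert (a + 1)) + 1 := by
  have hadj := p.adj_getVert_succ (i := a + 1) (by omega)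
  rw [show a + 1 + 1 = a + 2 by omega] at hadj
  rcases dist_adj_cases hT (x := x) hadj with hc | hc
  · exact hc
  · exact absurd (unique_descent hT (x := x)
      (getVert_ne hT p hp (a := a) (b := a + 2) (by omega) (by omega))
      (p.adj_getVert_succ (i := a) (by omega))
      ((p.adj_getVert_succ (i := a + 1) (by omega)).symm)
      h1 (by omega)) (fun h => h)

lemma no_valley_bump' (hT : T.IsTree) {u v : V} (p : T.Walk u v) (hp : p.IsPath) (x : V)
    {a : ℕ} (ha : a + 2 ≤ p.length)
    (h1 : T.dist x (p.getVert (a + 1)) = T.dist x (p.getVert (a + 2)) + 1) :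
    T.dist x (p.getVert a) = T.dist x (p.getVert (a + 1)) + 1 := by
  have hadj2 := (p.adj_getVert_succ (i := a + 1) (by omega))
  rw [show a + 1 + 1 = a + 2 by omega] at hadj2
  rcases dist_adj_cases hT (x := x) (p.adj_getVert_succ (i := a) (by omega)) with hc | hc
  · exact absurd (unique_descent hT (x := x)
      (getVert_ne hT p hp (a := a) (b := a + 2) (by omega) (by omega))
      (p.adj_getVert_succ (i := a) (by omega))
      hadj2.symm
      (by omega) (by omega)) (fun h => h)
  · exact hc

/-- The valley lemma: distances from `x` to the vertices of a path in a tree first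
decrease by steps of one, then increase by steps of one. -/
lemma valley (hT : T.IsTree) {u v : V} (p : T.Walk u v) (hp : p.IsPath) (x : V) :
    ∃ j, j ≤ p.length ∧
      (∀ m, j ≤ m → m ≤ p.length →
        T.dist x (p.getVert m) = T.dist x (p.getVert j) + (m - j)) ∧
      (∀ m, m ≤ j → T.dist x (p.getVert m) = T.dist x (p.getVert j) + (j - m)) := by
  obtain ⟨j, hjmem, hjmin⟩ := Finset.exists_min_image (Finset.range (p.length + 1))
    (fun m => T.dist x (p.getVert m)) ⟨0, by simp⟩
  rw [Finset.mem_range] at hjmem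
  have hj : j ≤ p.length := by omega
  refine ⟨j, hj, ?_, ?_⟩
  · -- ascending side
    have key : ∀ k, j + k ≤ p.length →
        T.dist x (p.getVert (j + k)) = T.dist x (p.getVert j) + k := by
      intro k
      induction k using Nat.strong_induction_on with
      | _ k ih =>
        intro hk
        match k with
        | 0 => simp
        | 1 =>
          have hmin := hjmin (j + 1) (by rw [Finset.mem_range]; omega)
          rcases dist_adj_cases hT (x := x) (p.adj_getVert_succ (i := j) (by omega)) with
            hc | hc <;> omega
        | k + 2 =>
          have h1 := ih k (by omega) (by omega)
          have h2 := ih (k + 1) (by omega) (by omega)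
          have e1 : j + (k + 1) = j + k + 1 := by omega
          have e2 : j + (k + 2) = j + k + 2 := by omega
          rw [e1] at h2
          rw [e2]
          have := no_valley_bump hT p hp x (a := j + k) (by omega) (by omega)
          omega
    intro m hm1 hm2
    have := key (m - j) (by omega)
    rwa [show j + (m - j) = m by omega] at this
  · -- descending side
    have key : ∀ k, k ≤ j →
        T.dist x (p.getVert (j - k)) = T.dist x (p.getVert j) + k := by
      intro k
      induction k using Nat.strong_induction_on with
      | _ k ih =>
        intro hk
        match k with
        | 0 => simp
        | 1 =>
          have hmin := hjmin (j - 1) (by rw [Finset.mem_range]; omega)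
          have hadj := p.adj_getVert_succ (i := j - 1) (by omega)
          rw [show j - 1 + 1 = j by omega] at hadj
          rcases dist_adj_cases hT (x := x) hadj with hc | hc <;> omega
        | k + 2 =>
          have h1 := ih k (by omega) (by omega)
          have h2 := ih (k + 1) (by omega) (by omega)
          have := no_valley_bump' hT p hp x (a := j - (k + 2)) (by omega)
            (by rw [show j - (k + 2) + 1 = j - (k + 1) by omega,
              show j - (k + 2) + 2 = j - k by omega]; omega)
          rw [show j - (k + 2) + 1 = j - (k + 1) by omega] at this
          omega
    intro m hm
    have := key (j - m) (by omega)
    rwa [show j - (j - m) = m by omega] at this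

lemma fermatDist_comm (G : SimpleGraph V) (u x y : V) :
    fermatDist G u x y = fermatDist G u y x :=
  iInf_congr fun σ => by omega

lemma fermatDist_le_fermatEcc [Fintype V] (G : SimpleGraph V) (u x y : V) :
    fermatDist G u x y ≤ fermatEcc G u := by
  rw [fermatEcc]
  have := Finset.le_sup (f := fun p : V × V => fermatDist G u p.1 p.2)
    (s := Finset.univ) (Finset.mem_univ (x, y))
  simpa using this

lemma fermatEcc_le_s4 [Fintype V] (G : SimpleGraph V) (u : V) {n : ℕ}
    (h : ∀ x y, fermatDist G u x y ≤ n) : fermatEcc G u ≤ n := by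
  rw [fermatEcc]
  exact Finset.sup_le fun p _ => h p.1 p.2

lemma dist_le_gdiam [Fintype V] (G : SimpleGraph V) (x y : V) :
    G.dist x y ≤ gdiam G := by
  rw [gdiam]
  have := Finset.le_sup (f := fun p : V × V => G.dist p.1 p.2)
    (s := Finset.univ) (Finset.mem_univ (x, y))
  simpa using this

lemma dist_le_ecc2 [Fintype V] (G : SimpleGraph V) (u x : V) :
    G.dist u x ≤ ecc2 G u := by
  rw [ecc2]
  have := Finset.le_sup (f := fun v => G.dist u v)
    (s := Finset.univ) (Finset.mem_univ x)
  simpa using this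

lemma ecc2_le [Fintype V] (G : SimpleGraph V) (u : V) {n : ℕ}
    (h : ∀ x, G.dist u x ≤ n) : ecc2 G u ≤ n := by
  rw [ecc2]
  exact Finset.sup_le fun x _ => h x

/-- Median formula: in a tree, twice the Fermat distance equals the perimeter. -/
lemma two_mul_fermatDist (hT : T.IsTree) (u x y : V) :
    2 * fermatDist T u x y = T.dist u x + T.dist u y + T.dist x y := by
  obtain ⟨p, hp, hpl⟩ := (hT.isConnected x y).exists_path_of_dist
  obtain ⟨j, hj, hasc, hdesc⟩ := valley hT p hp u
  have hx : T.dist u x = T.dist u (p.getVert j) + j := by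
    have := hdesc 0 (by omega)
    rwa [p.getVert_zero, Nat.sub_zero] at this
  have hy : T.dist u y = T.dist u (p.getVert j) + (p.length - j) := by
    have := hasc p.length hj le_rfl
    rwa [p.getVert_length] at this
  have hjx : T.dist (p.getVert j) x = j := by
    rw [SimpleGraph.dist_comm]
    exact (getVert_coords hT p hp hj).1
  have hjy : T.dist (p.getVert j) y = p.length - j :=
    (getVert_coords hT p hp hj).2
  have hju : T.dist (p.getVert j) u = T.dist u (p.getVert j) := SimpleGraph.dist_comm ..
  have hub : fermatDist T u x y ≤
      T.dist (p.getVert j) u + T.dist (p.getVert j) x + T.dist (p.getVert j) y :=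
    Nat.sInf_le ⟨p.getVert j, rfl⟩
  have hne : (Set.range fun σ => T.dist σ u + T.dist σ x + T.dist σ y).Nonempty :=
    ⟨_, ⟨u, rfl⟩⟩
  obtain ⟨σ, hσ⟩ := Nat.sInf_mem hne
  have hlb : fermatDist T u x y = T.dist σ u + T.dist σ x + T.dist σ y := hσ.symm
  have t1 : T.dist u x ≤ T.dist u σ + T.dist σ x := hT.isConnected.dist_triangle
  have t2 : T.dist u y ≤ T.dist u σ + T.dist σ y := hT.isConnected.dist_triangle
  have t3 : T.dist x y ≤ T.dist x σ + T.dist σ y := hT.isConnected.dist_triangle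
  have c1 : T.dist u σ = T.dist σ u := SimpleGraph.dist_comm ..
  have c2 : T.dist x σ = T.dist σ x := SimpleGraph.dist_comm ..
  omega

/-- Core bad-case estimate: both projections on the small side of `i`. -/
lemma step_bad [Fintype V] (hT : T.IsTree) {v₀ vd : V} (P : T.Walk v₀ vd) (hP : P.IsPath)
    (hdiam : P.length = gdiam T) {i jx jy : ℕ} {x y : V}
    (hi : 2 * i + 1 ≤ P.length) (hjx : jx ≤ i) (hjy : jy ≤ jx)
    (hxasc : ∀ m, jx ≤ m → m ≤ P.length →
      T.dist x (P.getVert m) = T.dist x (P.getVert jx) + (m - jx))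
    (hyasc : ∀ m, jy ≤ m → m ≤ P.length →
      T.dist y (P.getVert m) = T.dist y (P.getVert jy) + (m - jy)) :
    2 * fermatDist T (P.getVert (i + 1)) x y ≤ 2 * fermatEcc T (P.getVert i) := by
  set d := P.length with hd
  set hx := T.dist x (P.getVert jx) with hhx
  set hy := T.dist y (P.getVert jy) with hhy
  -- basic distances
  have Dx1 : T.dist x (P.getVert (i + 1)) = hx + (i + 1 - jx) := hxasc (i + 1) (by omega) (by omega)
  have Dy1 : T.dist y (P.getVert (i + 1)) = hy + (i + 1 - jy) := hyasc (i + 1) (by omega) (by omega)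
  have Dyi : T.dist y (P.getVert i) = hy + (i - jy) := hyasc i (by omega) (by omega)
  have Dyd : T.dist y (P.getVert d) = hy + (d - jy) := hyasc d (by omega) (by omega)
  have hvd : P.getVert d = vd := P.getVert_length
  have Dij : T.dist (P.getVert jy) (P.getVert jx) = jx - jy := dist_getVert hT P hP hjy (by omega)
  have Did : T.dist (P.getVert i) vd = d - i := (getVert_coords hT P hP (show i ≤ P.length by omega)).2
  -- height bound for x
  have hxb : hx + (d - jx) ≤ d := by
    have h1 := hxasc d (by omega) (by omega)
    rw [hvd] at h1
    have h2 : T.dist x vd ≤ gdiam T := dist_le_gdiam T x vd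
    omega
  -- triangle for dist x y
  have hxy : T.dist x y ≤ hx + (jx - jy) + hy := by
    have t1 : T.dist x y ≤ T.dist x (P.getVert jx) + T.dist (P.getVert jx) y :=
      hT.isConnected.dist_triangle
    have t2 : T.dist (P.getVert jx) y ≤ T.dist (P.getVert jx) (P.getVert jy)
        + T.dist (P.getVert jy) y := hT.isConnected.dist_triangle
    have c1 : T.dist (P.getVert jx) (P.getVert jy) = T.dist (P.getVert jy) (P.getVert jx) :=
      SimpleGraph.dist_comm ..
    have c2 : T.dist (P.getVert jy) y = T.dist y (P.getVert jy) := SimpleGraph.dist_comm ..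
    omega
  -- perimeter of the witness triple
  have hwit : 2 * fermatDist T (P.getVert i) y vd =
      (hy + (i - jy)) + (d - i) + (hy + (d - jy)) := by
    rw [two_mul_fermatDist hT]
    have c1 : T.dist (P.getVert i) y = T.dist y (P.getVert i) := SimpleGraph.dist_comm ..
    rw [c1, Dyi, Did, ← hvd, Dyd]
  have hper : 2 * fermatDist T (P.getVert (i + 1)) x y =
      T.dist x (P.getVert (i+1)) + T.dist y (P.getVert (i+1)) + T.dist x y := by
    rw [two_mul_fermatDist hT]
    have c1 : T.dist (P.getVert (i+1)) x = T.dist x (P.getVert (i+1)) := SimpleGraph.dist_comm ..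
    have c2 : T.dist (P.getVert (i+1)) y = T.dist y (P.getVert (i+1)) := SimpleGraph.dist_comm ..
    omega
  have hle := fermatDist_le_fermatEcc T (P.getVert i) y vd
  omega

/-- The monotone step: on a diametrical path, the Fermat eccentricity does not increase
when moving one step towards the middle (from the left). -/
lemma fermatEcc_step [Fintype V] (hT : T.IsTree) {v₀ vd : V} (P : T.Walk v₀ vd) (hP : P.IsPath)
    (hdiam : P.length = gdiam T) {i : ℕ} (hi : 2 * i + 1 ≤ P.length) :
    fermatEcc T (P.getVert (i + 1)) ≤ fermatEcc T (P.getVert i) := by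
  apply fermatEcc_le_s4
  intro x y
  obtain ⟨jx, hjx, hxasc, hxdesc⟩ := valley hT P hP x
  obtain ⟨jy, hjy, hyasc, hydesc⟩ := valley hT P hP y
  by_cases hA : jx ≤ i ∧ jy ≤ i
  · -- bad case: both projections left of i+1
    rcases le_or_gt jy jx with hord | hord
    · have := step_bad hT P hP hdiam hi hA.1 hord hxasc hyasc
      omega
    · have := step_bad hT P hP hdiam hi hA.2 (le_of_lt hord) hyasc hxasc
      rw [fermatDist_comm] at this
      omega
  · -- good case: some projection at least i+1; perimeter decreases
    have Dx : T.dist x (P.getVert i) + T.dist y (P.getVert i) ≥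
        T.dist x (P.getVert (i+1)) + T.dist y (P.getVert (i+1)) := by
      rcases le_or_gt jx i with h1 | h1
      · -- then jy ≥ i+1
        have h2 : i < jy := by
          rcases le_or_gt jy i with h2 | h2
          · exact absurd ⟨h1, h2⟩ hA
          · exact h2
        have e1 := hxasc i h1 (by omega)
        have e2 := hxasc (i+1) (by omega) (by omega)
        have e3 := hydesc i (by omega)
        have e4 := hydesc (i+1) (by omega)
        omega
      · have e1 := hxdesc i (by omega)
        have e2 := hxdesc (i+1) (by omega)
        rcases le_or_gt jy i with h2 | h2
        · have e3 := hyasc i h2 (by omega)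
          have e4 := hyasc (i+1) (by omega) (by omega)
          omega
        · have e3 := hydesc i (by omega)
          have e4 := hydesc (i+1) (by omega)
          omega
    have p1 := two_mul_fermatDist hT (P.getVert (i+1)) x y
    have p2 := two_mul_fermatDist hT (P.getVert i) x y
    have c1 : T.dist (P.getVert (i+1)) x = T.dist x (P.getVert (i+1)) := SimpleGraph.dist_comm ..
    have c2 : T.dist (P.getVert (i+1)) y = T.dist y (P.getVert (i+1)) := SimpleGraph.dist_comm ..
    have c3 : T.dist (P.getVert i) x = T.dist x (P.getVert i) := SimpleGraph.dist_comm ..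
    have c4 : T.dist (P.getVert i) y = T.dist y (P.getVert i) := SimpleGraph.dist_comm ..
    have hle := fermatDist_le_fermatEcc T (P.getVert i) x y
    omega

lemma fermatEcc_adj [Fintype V] (hT : T.IsTree) {a b : V} (h : T.Adj a b) :
    fermatEcc T a ≤ fermatEcc T b + 1 := by
  apply fermatEcc_le_s4
  intro x y
  have p1 := two_mul_fermatDist hT a x y
  have p2 := two_mul_fermatDist hT b x y
  have hab : T.dist a b = 1 := SimpleGraph.dist_eq_one_iff_adj.mpr h
  have t1 : T.dist a x ≤ T.dist a b + T.dist b x := hT.isConnected.dist_triangle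
  have t2 : T.dist a y ≤ T.dist a b + T.dist b y := hT.isConnected.dist_triangle
  have hle := fermatDist_le_fermatEcc T b x y
  omega

lemma fermatEcc_step_right [Fintype V] (hT : T.IsTree) {v₀ vd : V} (P : T.Walk v₀ vd)
    (hP : P.IsPath) (hdiam : P.length = gdiam T) {i : ℕ}
    (hi : P.length ≤ 2 * i + 1) (hi2 : i + 1 ≤ P.length) :
    fermatEcc T (P.getVert i) ≤ fermatEcc T (P.getVert (i + 1)) := by
  set d := P.length with hd
  have hrev := fermatEcc_step hT P.reverse hP.reverse
    (by rw [SimpleGraph.Walk.length_reverse]; exact hdiam)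
    (i := d - 1 - i) (by rw [SimpleGraph.Walk.length_reverse]; omega)
  rw [SimpleGraph.Walk.getVert_reverse, SimpleGraph.Walk.getVert_reverse] at hrev
  rw [show P.length - (d - 1 - i + 1) = i by omega, show P.length - (d - 1 - i) = i + 1 by omega]
    at hrev
  exact hrev

/-- Minimality of the Fermat eccentricity at position `⌊d/2⌋` on a diametrical path. -/
lemma fermatEcc_chain [Fintype V] (hT : T.IsTree) {v₀ vd : V} (P : T.Walk v₀ vd)
    (hP : P.IsPath) (hdiam : P.length = gdiam T) :
    ∀ i ≤ P.length, fermatEcc T (P.getVert (P.length / 2)) ≤ fermatEcc T (P.getVert i) := by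
  set d := P.length with hd
  intro i hi
  rcases le_or_gt i (d / 2) with hc | hc
  · -- go down from i to d/2
    have : ∀ k, i + k ≤ d / 2 → fermatEcc T (P.getVert (i + k)) ≤ fermatEcc T (P.getVert i) := by
      intro k
      induction k with
      | zero => simp
      | succ k ih =>
        intro hk
        have h1 := ih (by omega)
        have h2 := fermatEcc_step hT P hP hdiam (i := i + k) (by omega)
        rw [show i + (k + 1) = i + k + 1 by omega]
        omega
    have := this (d / 2 - i) (by omega)
    rwa [show i + (d / 2 - i) = d / 2 by omega] at this
  · -- go up from d/2 to i
    have : ∀ k, d / 2 + k ≤ d →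
        fermatEcc T (P.getVert (d / 2)) ≤ fermatEcc T (P.getVert (d / 2 + k)) := by
      intro k
      induction k with
      | zero => simp
      | succ k ih =>
        intro hk
        have h1 := ih (by omega)
        have h2 := fermatEcc_step_right hT P hP hdiam (i := d / 2 + k) (by omega) (by omega)
        rw [show d / 2 + (k + 1) = d / 2 + k + 1 by omega]
        omega
    have := this (i - d / 2) (by omega)
    rwa [show d / 2 + (i - d / 2) = i by omega] at this

/-- Eccentricity bound for the middle vertex of a diametrical path. -/
lemma ecc2_middle [Fintype V] (hT : T.IsTree) {v₀ vd : V} (P : T.Walk v₀ vd)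
    (hP : P.IsPath) (hdiam : P.length = gdiam T) :
    ecc2 T (P.getVert (P.length / 2)) ≤ P.length - P.length / 2 := by
  apply ecc2_le
  intro u
  obtain ⟨j, hj, hasc, hdesc⟩ := valley hT P hP u
  have h0 : T.dist u (P.getVert 0) = T.dist u (P.getVert j) + j := by
    have := hdesc 0 (by omega); simpa using this
  have hD : T.dist u (P.getVert P.length) = T.dist u (P.getVert j) + (P.length - j) :=
    hasc P.length hj le_rfl
  have b0 : T.dist u (P.getVert 0) ≤ P.length := by
    rw [P.getVert_zero, hdiam]; exact dist_le_gdiam T u v₀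
  have bD : T.dist u (P.getVert P.length) ≤ P.length := by
    rw [P.getVert_length, hdiam]; exact dist_le_gdiam T u vd
  have hcm : T.dist (P.getVert (P.length / 2)) u = T.dist u (P.getVert (P.length / 2)) :=
    SimpleGraph.dist_comm ..
  rcases le_or_gt j (P.length / 2) with hjm | hjm
  · have := hasc (P.length / 2) hjm (by omega)
    omega
  · have := hdesc (P.length / 2) (by omega)
    omega

/-- Central vertices lie in the middle of a diametrical path. -/
lemma central_position [Fintype V] (hT : T.IsTree) {v₀ vd : V} (P : T.Walk v₀ vd)
    (hP : P.IsPath) (hdiam : P.length = gdiam T) {c : V} (hc : isCentral T c)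
    {i0 : ℕ} (hi0 : i0 ≤ P.length) (hgi : P.getVert i0 = c) :
    P.length / 2 ≤ i0 ∧ i0 ≤ P.length - P.length / 2 := by
  have hub : ecc2 T c ≤ P.length - P.length / 2 :=
    le_trans (hc (P.getVert (P.length / 2))) (ecc2_middle hT P hP hdiam)
  have e1 : T.dist v₀ (P.getVert i0) = i0 := (getVert_coords hT P hP hi0).1
  have e2 : T.dist (P.getVert i0) vd = P.length - i0 := (getVert_coords hT P hP hi0).2
  rw [hgi] at e1 e2
  have l1 := dist_le_ecc2 T c v₀
  have l2 := dist_le_ecc2 T c vd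
  have c1 : T.dist c v₀ = T.dist v₀ c := SimpleGraph.dist_comm ..
  omega

end Aux

/-- Along a diametrical path `v₀v₁⋯v_d` of a finite tree containing all central
vertices, the Fermat eccentricity weakly decreases (by steps of at most 1) from `v₀` to the
center and weakly increases from the center to `v_d`; consequently among the vertices of the
path the central vertices attain the minimum Fermat eccentricity. -/
theorem fermatEcc_monotone_on_diametrical_path [Fintype V] (T : SimpleGraph V) (hT : T.IsTree)
    {v₀ vd : V} (P : T.Walk v₀ vd) (hP : P.IsPath) (d : ℕ) (hlen : P.length = d)
    (hdiam : d = gdiam T)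
    (hcentral : ∀ c : V, isCentral T c → ∃ i ≤ d, P.getVert i = c) :
    (∀ i : ℕ, i + 1 ≤ d / 2 →
      fermatEcc T (P.getVert (i + 1)) ≤ fermatEcc T (P.getVert i) ∧
      fermatEcc T (P.getVert i) ≤ fermatEcc T (P.getVert (i + 1)) + 1) ∧
    (∀ i : ℕ, d / 2 ≤ i → i ≤ d - 1 →
      fermatEcc T (P.getVert i) ≤ fermatEcc T (P.getVert (i + 1)) ∧
      fermatEcc T (P.getVert (i + 1)) ≤ fermatEcc T (P.getVert i) + 1) ∧
    (∀ c : V, isCentral T c → ∀ i ≤ d, fermatEcc T c ≤ fermatEcc T (P.getVert i)) := by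
  subst hlen
  refine ⟨?_, ?_, ?_⟩
  · intro i hi
    have hd2 : P.length / 2 ≤ P.length := Nat.div_le_self _ _
    refine ⟨fermatEcc_step hT P hP hdiam (by omega), ?_⟩
    exact fermatEcc_adj hT (P.adj_getVert_succ (by omega))
  · intro i hi1 hi2
    rcases Nat.eq_zero_or_pos P.length with h0 | h0
    · have e1 : P.getVert (i + 1) = vd := P.getVert_of_length_le (by omega)
      have e2 : P.getVert i = vd := P.getVert_of_length_le (by omega)
      rw [e1, e2]
      exact ⟨le_rfl, Nat.le_succ _⟩
    · have hile : i < P.length := by omega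
      refine ⟨fermatEcc_step_right hT P hP hdiam (by omega) (by omega), ?_⟩
      exact fermatEcc_adj hT (P.adj_getVert_succ hile).symm
  · intro c hc i hi
    obtain ⟨i0, hi0d, hgi⟩ := hcentral c hc
    obtain ⟨h1, h2⟩ := central_position hT P hP hdiam hc hi0d hgi
    rcases eq_or_lt_of_le h1 with heq | hlt
    · rw [← hgi, ← heq]
      exact fermatEcc_chain hT P hP hdiam i hi
    · have hrevd : P.reverse.length = gdiam T := by
        rw [SimpleGraph.Walk.length_reverse]; exact hdiam
      have hch := fermatEcc_chain hT P.reverse hP.reverse hrevd (P.length - i)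
        (by rw [SimpleGraph.Walk.length_reverse]; omega)
      rw [SimpleGraph.Walk.getVert_reverse, SimpleGraph.Walk.getVert_reverse,
        SimpleGraph.Walk.length_reverse] at hch
      rw [show P.length - (P.length - i) = i by omega] at hch
      have hi0e : i0 = P.length - P.length / 2 := by omega
      rw [← hgi, hi0e]
      rwa [show P.length - P.length / 2 = P.length - P.length / 2 by rfl] at hch
end
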